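/- Let (p₁,q₁) and (p₂,q₂) be primitive pairs with q₁ and q₂ even and |p₁q₂ − p₂q₁| = 2. Then p₂ − p₁ and q₂ − q₁ are even, and the integer matrix M = [[p₁, (p₂−p₁)/2],[q₁, (q₂−q₁)/2]] has determinant ±1. Consequently M ∈ GL(2,ℤ) sends the column vector (1,0) to (p₁,q₁) and the column vector (1,2) to (p₂,q₂); i.e., GL(2,ℤ) acts transitively on the edges of W̄₁. -/

import Mathlib

/-- Let `(p₁,q₁)` and `(p₂,q₂)` be primitive pairs with `q₁, q₂` even and
`|p₁q₂ − p₂q₁| = 2`.  Then `p₂ − p₁` and `q₂ − q₁` are even, the integer matrix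
`M = [[p₁, (p₂−p₁)/2],[q₁, (q₂−q₁)/2]]` has determinant `±1`, and `M` sends the column
vector `(1,0)` to `(p₁,q₁)` and `(1,2)` to `(p₂,q₂)`; i.e. `GL(2,ℤ)` acts transitively on
the edges of `W̄₁`. -/
theorem GL2Z_transitive_on_edges (p₁ q₁ p₂ q₂ : ℤ)
    (h₁ : IsCoprime p₁ q₁) (h₂ : IsCoprime p₂ q₂)
    (hq₁ : Even q₁) (hq₂ : Even q₂)
    (h : |p₁ * q₂ - p₂ * q₁| = 2) :
    Even (p₂ - p₁) ∧ Even (q₂ - q₁) ∧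
    ((!![p₁, (p₂ - p₁) / 2; q₁, (q₂ - q₁) / 2] : Matrix (Fin 2) (Fin 2) ℤ).det = 1 ∨
      (!![p₁, (p₂ - p₁) / 2; q₁, (q₂ - q₁) / 2] : Matrix (Fin 2) (Fin 2) ℤ).det = -1) ∧
    (!![p₁, (p₂ - p₁) / 2; q₁, (q₂ - q₁) / 2] : Matrix (Fin 2) (Fin 2) ℤ).mulVec ![1, 0] =
      ![p₁, q₁] ∧
    (!![p₁, (p₂ - p₁) / 2; q₁, (q₂ - q₁) / 2] : Matrix (Fin 2) (Fin 2) ℤ).mulVec ![1, 2] =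
      ![p₂, q₂] := by

  -- `p₁` and `p₂` are odd
  have hp₁ : ¬ (2 : ℤ) ∣ p₁ := fun hd => by
    have : IsUnit (2 : ℤ) := h₁.isUnit_of_dvd' hd hq₁.two_dvd
    norm_num [Int.isUnit_iff] at this
  have hp₂ : ¬ (2 : ℤ) ∣ p₂ := fun hd => by
    have : IsUnit (2 : ℤ) := h₂.isUnit_of_dvd' hd hq₂.two_dvd
    norm_num [Int.isUnit_iff] at this
  have hop₁ : Odd p₁ := Int.not_even_iff_odd.1 (fun he => hp₁ he.two_dvd)
  have hop₂ : Odd p₂ := Int.not_even_iff_odd.1 (fun he => hp₂ he.two_dvd)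
  have hep : Even (p₂ - p₁) := hop₂.sub_odd hop₁
  have heq : Even (q₂ - q₁) := hq₂.sub hq₁
  obtain ⟨a, ha⟩ := id hep
  obtain ⟨b, hb⟩ := id heq
  have ha' : (p₂ - p₁) / 2 = a := by omega
  have hb' : (q₂ - q₁) / 2 = b := by omega
  have hdet : (!![p₁, (p₂ - p₁) / 2; q₁, (q₂ - q₁) / 2] : Matrix (Fin 2) (Fin 2) ℤ).det
      = p₁ * b - q₁ * a := by
    rw [Matrix.det_fin_two_of, ha', hb']; ring
  have h2 : p₁ * q₂ - p₂ * q₁ = 2 ∨ p₁ * q₂ - p₂ * q₁ = -2 := abs_eq (by norm_num) |>.1 h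
  refine ⟨hep, heq, ?_, ?_, ?_⟩
  · rw [hdet]
    have key : 2 * (p₁ * b - q₁ * a) = p₁ * q₂ - p₂ * q₁ := by
      linear_combination q₁ * ha - p₁ * hb
    omega
  · funext i; fin_cases i <;> simp [Matrix.mulVec, dotProduct]
  · funext i
    fin_cases i <;> simp [Matrix.mulVec, dotProduct, ha', hb'] <;> omega
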